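/- arXiv:2510.10458 — 2 statements merged into one kernel-verified Lean document; each statement's English description precedes it below -/
import Mathlib

section
/- Let F' be a graph with a center vertex v* (a vertex adjacent to all other vertices of F'), let F = F' − v*, and let G be a graph with a center vertex w (adjacent to all other vertices of G). Then G is F'-saturated if and only if G − w is F-saturated. -/
open SimpleGraph

/-- Graph `G` contains a copy of `H`, i.e. a subgraph isomorphic to `H`. -/
def Contains {α β : Type*} (G : SimpleGraph α) (H : SimpleGraph β) : Prop :=
  ∃ f : β ↪ α, ∀ a b, H.Adj a b → G.Adj (f a) (f b)

/-- `G` together with the extra edge `uv`. -/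
def addE {α : Type*} (G : SimpleGraph α) (u v : α) : SimpleGraph α :=
  G ⊔ SimpleGraph.fromEdgeSet {s(u, v)}

/-- `G` is `H`-saturated: `G` is `H`-free and adding any non-edge creates a copy of `H`. -/
def Saturated {α β : Type*} (G : SimpleGraph α) (H : SimpleGraph β) : Prop :=
  ¬ Contains G H ∧ ∀ u v : α, u ≠ v → ¬ G.Adj u v → Contains (addE G u v) H

/-- The join `K₁ ∨ F`: a new vertex (`none`) adjacent to every vertex of `F`. -/
def joinK1 {β : Type*} (F : SimpleGraph β) : SimpleGraph (Option β) where
  Adj x y :=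
    match x, y with
    | some a, some b => F.Adj a b
    | some _, none => True
    | none, some _ => True
    | none, none => False
  symm := by
    constructor
    rintro (_ | a) (_ | b) h
    · exact h.elim
    · trivial
    · trivial
    · exact h.symm
  loopless := by
    constructor
    rintro (_ | a) h
    · exact h.elim
    · exact F.loopless.irrefl a h

/-- The saturation number `sat(n, H)`: minimum number of edges of an `H`-saturated
graph on `n` vertices. -/
noncomputable def satNum {β : Type*} (n : ℕ) (H : SimpleGraph β) : ℕ :=
  sInf {e | ∃ G : SimpleGraph (Fin n), Saturated G H ∧ G.edgeSet.ncard = e}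

/-- The triangle. -/
def K3 : SimpleGraph (Fin 3) := ⊤

/-- `G` is `{K₃, Pₖ}`-saturated. -/
def SatKP {V : Type*} (G : SimpleGraph V) (k : ℕ) : Prop :=
  ¬ Contains G K3 ∧ ¬ Contains G (SimpleGraph.pathGraph k) ∧
    ∀ u v : V, u ≠ v → ¬ G.Adj u v →
      Contains (addE G u v) K3 ∨ Contains (addE G u v) (SimpleGraph.pathGraph k)

/-- The saturation number `sat(n, {K₃, Pₖ})`. -/
noncomputable def satKPNum (n k : ℕ) : ℕ :=
  sInf {e | ∃ G : SimpleGraph (Fin n), SatKP G k ∧ G.edgeSet.ncard = e}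

/-- Disjoint union of two graphs. -/
def sumGraph {α β : Type*} (A : SimpleGraph α) (B : SimpleGraph β) :
    SimpleGraph (α ⊕ β) where
  Adj x y :=
    match x, y with
    | .inl a, .inl b => A.Adj a b
    | .inr a, .inr b => B.Adj a b
    | _, _ => False
  symm := by
    constructor
    rintro (a | a) (b | b) h
    · exact h.symm
    · exact h.elim
    · exact h.elim
    · exact h.symm
  loopless := by
    constructor
    rintro (a | a) h
    · exact A.loopless.irrefl a h
    · exact B.loopless.irrefl a h

/-- Disjoint union of a family of graphs. -/
def sigmaGraph {ι : Type*} {V : ι → Type*} (G : ∀ i, SimpleGraph (V i)) :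
    SimpleGraph (Σ i, V i) where
  Adj x y := ∃ (i : ι) (a b : V i), x = ⟨i, a⟩ ∧ y = ⟨i, b⟩ ∧ (G i).Adj a b
  symm := by
    constructor
    rintro x y ⟨i, a, b, rfl, rfl, h⟩
    exact ⟨i, b, a, rfl, rfl, h.symm⟩
  loopless := by
    constructor
    rintro ⟨j, c⟩ ⟨i, a, b, h1, h2, h⟩
    rw [h1] at h2
    obtain ⟨rfl⟩ := h2
    exact (G i).loopless.irrefl a h

lemma containsA {α β : Type*} (F' : SimpleGraph β) (vstar : β)
    (H : SimpleGraph α) (w : α) (hw : ∀ a, a ≠ w → H.Adj w a)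
    (h : Contains (SimpleGraph.induce {a | a ≠ w} H)
      (SimpleGraph.induce {b | b ≠ vstar} F')) :
    Contains H F' := by
  classical
  obtain ⟨f, hf⟩ := h
  refine ⟨⟨fun b => if hb : b = vstar then w else ↑(f ⟨b, hb⟩), ?_⟩, ?_⟩
  · intro b₁ b₂ h
    dsimp only at h
    split_ifs at h with h1 h2 h2
    · exact h1.trans h2.symm
    · exact absurd h.symm (f ⟨b₂, h2⟩).2
    · exact absurd h (f ⟨b₁, h1⟩).2
    · exact congrArg Subtype.val (f.injective (Subtype.ext h))
  · intro a b hab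
    show H.Adj (if h1 : a = vstar then w else ↑(f ⟨a, h1⟩)) (if h2 : b = vstar then w else ↑(f ⟨b, h2⟩))
    split_ifs with h1 h2 h2
    · exact absurd (h1.trans h2.symm) hab.ne
    · exact hw _ (f ⟨b, h2⟩).2
    · exact (hw _ (f ⟨a, h1⟩).2).symm
    · exact hf ⟨a, h1⟩ ⟨b, h2⟩ hab

lemma containsB {α β : Type*} (F' : SimpleGraph β) (vstar : β)
    (hv : ∀ b, b ≠ vstar → F'.Adj vstar b)
    (H : SimpleGraph α) (w : α) (h : Contains H F') :
    Contains (SimpleGraph.induce {a | a ≠ w} H)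
      (SimpleGraph.induce {b | b ≠ vstar} F') := by
  classical
  obtain ⟨f, hf⟩ := h
  have key : ∀ b : {b | b ≠ vstar}, f ↑b = w → f vstar ≠ w := by
    intro b hb hv'
    exact b.2 (f.injective (hv'.trans hb.symm)).symm
  refine ⟨⟨fun b => if hb : f ↑b = w then ⟨f vstar, key b hb⟩ else ⟨f ↑b, hb⟩, ?_⟩, ?_⟩
  · intro b₁ b₂ h
    dsimp only at h
    split_ifs at h with h1 h2 h2 <;>
      rw [Subtype.mk.injEq] at h
    · exact Subtype.ext (f.injective (h1.trans h2.symm))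
    · exact absurd (f.injective h).symm b₂.2
    · exact absurd (f.injective h) b₁.2
    · exact Subtype.ext (f.injective h)
  · intro a b hab
    have hab' : F'.Adj ↑a ↑b := hab
    have hne : (a : β) ≠ ↑b := hab'.ne
    show (SimpleGraph.induce {a | a ≠ w} H).Adj (if h1 : f ↑a = w then ⟨f vstar, key a h1⟩ else ⟨f ↑a, h1⟩) (if h2 : f ↑b = w then ⟨f vstar, key b h2⟩ else ⟨f ↑b, h2⟩)
    split_ifs with h1 h2 h2
    · exact absurd (f.injective (h1.trans h2.symm)) hne
    · exact hf vstar ↑b (hv ↑b b.2)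
    · exact (hf vstar ↑a (hv ↑a a.2)).symm
    · exact hf ↑a ↑b hab'

lemma induce_addE {α : Type*} (G : SimpleGraph α) (w : α) (u v : {a | a ≠ w}) :
    SimpleGraph.induce {a | a ≠ w} (addE G ↑u ↑v) =
      addE (SimpleGraph.induce {a | a ≠ w} G) u v := by
  ext x y
  simp only [addE, SimpleGraph.comap_adj, SimpleGraph.sup_adj,
    SimpleGraph.fromEdgeSet_adj, Set.mem_singleton_iff, Sym2.eq, Sym2.rel_iff',
    Prod.mk.injEq, Prod.swap_prod_mk, ne_eq, Subtype.ext_iff]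
  tauto

theorem statement_4 {α β : Type*} [Fintype α] [Fintype β]
    (F' : SimpleGraph β) (vstar : β) (hv : ∀ b, b ≠ vstar → F'.Adj vstar b)
    (G : SimpleGraph α) (w : α) (hw : ∀ a, a ≠ w → G.Adj w a) :
    Saturated G F' ↔
      Saturated (SimpleGraph.induce {a | a ≠ w} G)
        (SimpleGraph.induce {b | b ≠ vstar} F') := by
  constructor
  · rintro ⟨hfree, hsat⟩
    refine ⟨fun hc => hfree (containsA F' vstar G w hw hc), ?_⟩
    intro u v huv hadj
    have h1 : (↑u : α) ≠ ↑v := fun h => huv (Subtype.ext h)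
    have h2 : ¬ G.Adj ↑u ↑v := hadj
    have h3 := hsat ↑u ↑v h1 h2
    have := containsB F' vstar hv (addE G ↑u ↑v) w h3
    rwa [induce_addE] at this
  · rintro ⟨hfree, hsat⟩
    refine ⟨fun hc => hfree (containsB F' vstar hv G w hc), ?_⟩
    intro u v huv hadj
    have hu : u ≠ w := by
      rintro rfl
      exact hadj (hw v (fun h => huv h.symm))
    have hv2 : v ≠ w := by
      rintro rfl
      exact hadj (hw u huv).symm
    have h3 := hsat ⟨u, hu⟩ ⟨v, hv2⟩ (fun h => huv (congrArg Subtype.val h))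
      (fun h => hadj h)
    rw [← induce_addE] at h3
    refine containsA F' vstar (addE G u v) w ?_ h3
    intro a ha
    exact Or.inl (hw a ha)
end

section
/- Let H be a (K₃ ∪ P_k)-saturated graph (k ≥ 3). Then every component T of H that is a tree is {K₃, P_k}-saturated, provided H contains a triangle in some other component. -/
open SimpleGraph

lemma addE_adj {α : Type*} (G : SimpleGraph α) (u v x y : α) :
    (addE G u v).Adj x y ↔ G.Adj x y ∨ (s(x, y) = s(u, v) ∧ x ≠ y) := by
  simp [addE, SimpleGraph.fromEdgeSet_adj]

lemma sumGraph_adj_ll {α β : Type*} {A : SimpleGraph α} {B : SimpleGraph β}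
    {i j : α} : (sumGraph A B).Adj (.inl i) (.inl j) ↔ A.Adj i j := Iff.rfl

lemma sumGraph_adj_rr {α β : Type*} {A : SimpleGraph α} {B : SimpleGraph β}
    {i j : β} : (sumGraph A B).Adj (.inr i) (.inr j) ↔ B.Adj i j := Iff.rfl

lemma tri_free {W : Type*} {G : SimpleGraph W} (hG : G.IsAcyclic) :
    ¬ Contains G K3 := by
  rintro ⟨f, hf⟩
  have h01 : G.Adj (f 0) (f 1) := hf 0 1 (by simp [K3])
  have h12 : G.Adj (f 1) (f 2) := hf 1 2 (by simp [K3])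
  have h20 : G.Adj (f 2) (f 0) := hf 2 0 (by simp [K3])
  have hc : (SimpleGraph.Walk.cons h01 (SimpleGraph.Walk.cons h12
      (SimpleGraph.Walk.cons h20 SimpleGraph.Walk.nil))).IsCycle := by
    have e01 : f 0 ≠ f 1 := fun h => by simpa using f.injective h
    have e12 : f 1 ≠ f 2 := fun h => by simpa using f.injective h
    have e02 : f 0 ≠ f 2 := fun h => by simpa using f.injective h
    simp [SimpleGraph.Walk.isCycle_def, SimpleGraph.Walk.isTrail_def,
      e01, e12, e02, e01.symm, e12.symm, e02.symm, Sym2.eq_iff]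
  exact hG _ hc

lemma resolveE {α : Type*} {G : SimpleGraph α} {u v x y : α}
    (h : (addE G u v).Adj x y) (hx : x ≠ u) (hx' : x ≠ v) : G.Adj x y := by
  rcases (addE_adj G u v x y).1 h with h' | ⟨hs, _⟩
  · exact h'
  · rw [Sym2.eq_iff] at hs
    rcases hs with ⟨h1, _⟩ | ⟨h1, _⟩
    · exact absurd h1 hx
    · exact absurd h1 hx'
theorem statement_16 {V : Type*} [Fintype V] (k : ℕ) (hk : 3 ≤ k)
    (H : SimpleGraph V) (hsat : Saturated H (sumGraph K3 (SimpleGraph.pathGraph k)))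
    (C : H.ConnectedComponent) (htree : (SimpleGraph.induce C.supp H).IsTree)
    (a b c : V) (hab : H.Adj a b) (hbc : H.Adj b c) (hac : H.Adj a c)
    (hcomp : H.connectedComponentMk a ≠ C) :
    SatKP (SimpleGraph.induce C.supp H) k := by
  classical
  set T := SimpleGraph.induce C.supp H with hT
  have hmem : ∀ x : V, x ∈ C.supp ↔ H.connectedComponentMk x = C := fun x =>
    SimpleGraph.ConnectedComponent.mem_supp_iff C x
  have hamem : a ∉ C.supp := by rw [hmem]; exact hcomp
  have hbmem : b ∉ C.supp := by
    rw [hmem, ← SimpleGraph.ConnectedComponent.connectedComponentMk_eq_of_adj hab]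
    exact hcomp
  have hcmem : c ∉ C.supp := by
    rw [hmem, ← SimpleGraph.ConnectedComponent.connectedComponentMk_eq_of_adj hac]
    exact hcomp
  have hFmem : ∀ i : Fin 3, (![a, b, c] i) ∉ C.supp := by
    intro i
    fin_cases i
    · simpa using hamem
    · simpa using hbmem
    · simpa using hcmem
  refine ⟨tri_free htree.2, ?_, ?_⟩
  · -- T does not contain P_k
    rintro ⟨f, hf⟩
    apply hsat.1
    refine ⟨⟨Sum.elim ![a, b, c] (fun j => (f j : V)), ?_⟩, ?_⟩
    · rintro (i | i) (j | j) h
      · have hij : (![a, b, c] i : V) = ![a, b, c] j := by simpa using h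
        congr 1
        fin_cases i <;> fin_cases j <;>
          simp_all [hab.ne, hbc.ne, hac.ne, hab.ne', hbc.ne', hac.ne']
      · simp only [Sum.elim_inl, Sum.elim_inr] at h
        exact absurd (by rw [h]; exact (f j).2) (hFmem i)
      · simp only [Sum.elim_inl, Sum.elim_inr] at h
        exact absurd (by rw [← h]; exact (f i).2) (hFmem j)
      · simp only [Sum.elim_inr] at h
        exact congrArg Sum.inr (f.injective (Subtype.ext h))
    · rintro (i | i) (j | j) h
      · have hij : i ≠ j := h
        change H.Adj (Sum.elim ![a, b, c] (fun j => (f j : V)) (Sum.inl i))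
          (Sum.elim ![a, b, c] (fun j => (f j : V)) (Sum.inl j))
        fin_cases i <;> fin_cases j <;>
          simp_all [hab, hbc, hac, hab.symm, hbc.symm, hac.symm]
      · exact h.elim
      · exact h.elim
      · exact hf i j h
  · -- saturation for non-edges of T
    rintro u v huv hnadj
    have huV : (u : V) ≠ (v : V) := fun h => huv (Subtype.ext h)
    have hnH : ¬ H.Adj (u : V) (v : V) := hnadj
    obtain ⟨g, hg⟩ := hsat.2 (u : V) (v : V) huV hnH
    set S := sumGraph K3 (SimpleGraph.pathGraph k) with hS
    by_cases huse : ∃ x y, S.Adj x y ∧ s(g x, g y) = s((u : V), (v : V))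
    · obtain ⟨x, y, hxy, hsxy⟩ := huse
      rcases x with i | p <;> rcases y with j | q
      · -- new edge inside the triangle part
        left
        have hij : i ≠ j := hxy
        obtain ⟨m, hmi, hmj⟩ :=
          (by decide : ∀ i j : Fin 3, i ≠ j → ∃ m : Fin 3, m ≠ i ∧ m ≠ j) i j hij
        set w := g (Sum.inl m) with hw
        have hwi : w ≠ g (Sum.inl i) := fun hh => hmi (by simpa using g.injective hh)
        have hwj : w ≠ g (Sum.inl j) := fun hh => hmj (by simpa using g.injective hh)
        rw [Sym2.eq_iff] at hsxy
        have hwuv : w ≠ (u : V) ∧ w ≠ (v : V) := by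
          rcases hsxy with ⟨h1, h2⟩ | ⟨h1, h2⟩
          · exact ⟨fun hh => hwi (by rw [h1]; exact hh), fun hh => hwj (by rw [h2]; exact hh)⟩
          · exact ⟨fun hh => hwj (by rw [h2]; exact hh), fun hh => hwi (by rw [h1]; exact hh)⟩
        have h1 := resolveE (hg (Sum.inl m) (Sum.inl i) hmi) hwuv.1 hwuv.2
        have h2 := resolveE (hg (Sum.inl m) (Sum.inl j) hmj) hwuv.1 hwuv.2
        have hWUV : H.Adj w (u : V) ∧ H.Adj w (v : V) := by
          rcases hsxy with ⟨e1, e2⟩ | ⟨e1, e2⟩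
          · rw [e1] at h1; rw [e2] at h2; exact ⟨h1, h2⟩
          · rw [e1] at h1; rw [e2] at h2; exact ⟨h2, h1⟩
        have hwC : w ∈ C.supp := by
          rw [hmem, SimpleGraph.ConnectedComponent.connectedComponentMk_eq_of_adj hWUV.1]
          exact (hmem _).1 u.2
        refine ⟨⟨![u, v, ⟨w, hwC⟩], ?_⟩, ?_⟩
        · intro i' j' hh
          have n1 : u ≠ (⟨w, hwC⟩ : C.supp) := fun he => hwuv.1 (congrArg Subtype.val he).symm
          have n2 : v ≠ (⟨w, hwC⟩ : C.supp) := fun he => hwuv.2 (congrArg Subtype.val he).symm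
          fin_cases i' <;> fin_cases j' <;> simp_all
        · intro i' j' hK
          fin_cases i' <;> fin_cases j'
          · exact absurd rfl hK
          · exact (addE_adj T u v _ _).mpr (Or.inr ⟨rfl, huv⟩)
          · exact (addE_adj T u v _ _).mpr (Or.inl hWUV.1.symm)
          · exact (addE_adj T u v _ _).mpr (Or.inr ⟨Sym2.eq_swap, huv.symm⟩)
          · exact absurd rfl hK
          · exact (addE_adj T u v _ _).mpr (Or.inl hWUV.2.symm)
          · exact (addE_adj T u v _ _).mpr (Or.inl hWUV.1)
          · exact (addE_adj T u v _ _).mpr (Or.inl hWUV.2)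
          · exact absurd rfl hK
      · exact hxy.elim
      · exact hxy.elim
      · -- new edge inside the path part
        right
        have hpmem : g (Sum.inr p) ∈ C.supp := by
          rw [Sym2.eq_iff] at hsxy
          rcases hsxy with ⟨h1, _⟩ | ⟨h1, _⟩
          · rw [h1]; exact u.2
          · rw [h1]; exact v.2
        have hstep : ∀ j j' : Fin k, (SimpleGraph.pathGraph k).Adj j j' →
            g (Sum.inr j) ∈ C.supp → g (Sum.inr j') ∈ C.supp := by
          intro j j' hjj hmemj
          rcases (addE_adj H (u : V) (v : V) _ _).1
              (hg (Sum.inr j) (Sum.inr j') hjj) with h' | ⟨hs, _⟩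
          · rw [hmem] at hmemj ⊢
            rw [← SimpleGraph.ConnectedComponent.connectedComponentMk_eq_of_adj h']
            exact hmemj
          · rw [Sym2.eq_iff] at hs
            rcases hs with ⟨_, h2⟩ | ⟨_, h2⟩
            · rw [h2]; exact v.2
            · rw [h2]; exact u.2
        have hwalk : ∀ (x y : Fin k) (wlk : (SimpleGraph.pathGraph k).Walk x y),
            g (Sum.inr x) ∈ C.supp → g (Sum.inr y) ∈ C.supp := by
          intro x y wlk
          induction wlk with
          | nil => exact id
          | cons hadj rest ih => exact fun hx => ih (hstep _ _ hadj hx)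
        have hconn : (SimpleGraph.pathGraph k).Connected := by
          obtain ⟨k', rfl⟩ : ∃ k', k = k' + 1 := ⟨k - 1, by omega⟩
          exact SimpleGraph.pathGraph_connected k'
        have hall : ∀ j : Fin k, g (Sum.inr j) ∈ C.supp := fun j =>
          hwalk p j (hconn.preconnected p j).some hpmem
        refine ⟨⟨fun j => ⟨g (Sum.inr j), hall j⟩, fun j j' hjj => ?_⟩,
            fun j j' hjj => ?_⟩
        · simpa using g.injective (congrArg Subtype.val hjj)
        · rcases (addE_adj H (u : V) (v : V) _ _).1
              (hg (Sum.inr j) (Sum.inr j') hjj) with h' | ⟨hs, _⟩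
          · exact (addE_adj T u v _ _).mpr (Or.inl h')
          · refine (addE_adj T u v _ _).mpr (Or.inr ⟨?_, ?_⟩)
            · rw [Sym2.eq_iff] at hs ⊢
              rcases hs with ⟨e1, e2⟩ | ⟨e1, e2⟩
              · exact Or.inl ⟨Subtype.ext e1, Subtype.ext e2⟩
              · exact Or.inr ⟨Subtype.ext e1, Subtype.ext e2⟩
            · exact fun hh => hjj.ne (by simpa using g.injective (congrArg Subtype.val hh))
    · exact absurd ⟨g, fun x y h => by
        rcases (addE_adj H _ _ _ _).1 (hg x y h) with h' | ⟨h1, _⟩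
        · exact h'
        · exact absurd ⟨x, y, h, h1⟩ huse⟩ hsat.1
end
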